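/- arXiv:1904.03071 — 2 statements merged into one kernel-verified Lean document; each statement's English description precedes it below -/
import Mathlib

section
/- Let A be a small preadditive category. The assignments I ↦ T_I := {T ∈ Mod A : T(α) = 0 for all α ∈ I(a,b) and all a,b ∈ Ob(A)} and T ↦ I_T, where I_T(a,b) := {r ∈ A(a,b) : T(r) = 0 for all T ∈ T}, are mutually inverse bijections between the set of idempotent ideals of A and the set of TTF triples (equivalently, TTF classes) in Mod A. -/
set_option linter.unusedSectionVars false
set_option maxHeartbeats 1000000

open CategoryTheory CategoryTheory.Limits Opposite
noncomputable section
universe u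
variable (A : Type u) [SmallCategory A] [Preadditive A]

abbrev PMod := Aᵒᵖ ⥤ AddCommGrpCat.{u}

def Hrep (b : A) : PMod A where
  obj a := AddCommGrpCat.of (unop a ⟶ b)
  map f := AddCommGrpCat.ofHom (AddMonoidHom.mk' (fun g => f.unop ≫ g)
    (fun g h => Preadditive.comp_add _ _ _ _ _ _))
  map_id a := by ext g; simp
  map_comp f g := by
    ext h
    show (f ≫ g).unop ≫ h = g.unop ≫ f.unop ≫ h
    simp

def toH {a b : A} (γ : a ⟶ b) : ((Hrep A b).obj (op a)) := γ

def Hmap {b b' : A} (r : b ⟶ b') : Hrep A b ⟶ Hrep A b' where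
  app a := AddCommGrpCat.ofHom (AddMonoidHom.mk' (fun g => g ≫ r)
    (fun g h => Preadditive.add_comp _ _ _ _ _ _))
  naturality a a' f := by
    ext g
    show (f.unop ≫ g) ≫ r = f.unop ≫ g ≫ r
    exact Category.assoc (obj := A) _ _ _

def inSub {M : PMod A} (R : Subobject M) {a : A} (x : M.obj (op a)) : Prop :=
  ∃ y, R.arrow.app (op a) y = x


/-- A two-sided ideal of the preadditive category `A`. -/
structure CatIdeal : Type u where
  carrier : ∀ a b : A, AddSubgroup (a ⟶ b)
  comp_mem_left : ∀ {a b c : A} (f : a ⟶ b) (g : b ⟶ c), f ∈ carrier a b → f ≫ g ∈ carrier a c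
  comp_mem_right : ∀ {a b c : A} (f : a ⟶ b) (g : b ⟶ c), g ∈ carrier b c → f ≫ g ∈ carrier a c

/-- The product of two ideals: finite sums of composites. -/
def idealMul (I J : CatIdeal A) : ∀ a b : A, AddSubgroup (a ⟶ b) := fun a b =>
  AddSubgroup.closure
    {u | ∃ (c : A) (ψ : a ⟶ c) (φ : c ⟶ b), ψ ∈ J.carrier a c ∧ φ ∈ I.carrier c b ∧ u = ψ ≫ φ}

def CatIdeal.IsIdempotent (I : CatIdeal A) : Prop :=
  ∀ a b : A, idealMul A I I a b = I.carrier a b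

def IsTorsionPair (T F : Set (PMod A)) : Prop :=
  T = {X | X.Additive ∧ ∀ Y ∈ F, ∀ f : X ⟶ Y, f = 0} ∧
  F = {X | X.Additive ∧ ∀ Y ∈ T, ∀ f : Y ⟶ X, f = 0} ∧
  ∀ X : PMod A, X.Additive →
    ∃ (Z : PMod A) (p : X ⟶ Z), Z ∈ F ∧ Epi p ∧ kernel p ∈ T

def IsHereditaryTorsionClass (T : Set (PMod A)) : Prop :=
  (∃ F, IsTorsionPair A T F) ∧
  ∀ (S X : PMod A) (f : S ⟶ X), Mono f → X ∈ T → S ∈ T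

/-- A TTF class: a hereditary torsion class closed under products. -/
def IsTTFClass (T : Set (PMod A)) : Prop :=
  IsHereditaryTorsionClass A T ∧
  ∀ (ι : Type u) (g : ι → PMod A), (∀ i, g i ∈ T) → (∏ᶜ g) ∈ T

def TI (I : CatIdeal A) : Set (PMod A) :=
  {M | M.Additive ∧ ∀ (a b : A) (α : a ⟶ b), α ∈ I.carrier a b → M.map α.op = 0}

/-! ### Infrastructure: subfunctors, quotient modules -/

lemma Hrep_map {b : A} {a a' : Aᵒᵖ} (f : a ⟶ a') (γ : (Hrep A b).obj a) :
    (Hrep A b).map f γ = f.unop ≫ γ := rfl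

lemma Hrep_additive (b : A) : (Hrep A b).Additive := by
  constructor
  intro a a' f g
  ext γ
  show (f + g).unop ≫ γ = ((Hrep A b).map f + (Hrep A b).map g) γ
  exact Preadditive.add_comp _ _ _ f.unop g.unop γ

/-- A subfunctor of a module `X`. -/
structure SubF (X : PMod A) : Type u where
  S : ∀ a : A, AddSubgroup (X.obj (op a))
  mapMem : ∀ {a b : A} (φ : a ⟶ b), ∀ x ∈ S b, X.map φ.op x ∈ S a

lemma SubF.ext' {X : PMod A} {s t : SubF A X} (h : s.S = t.S) : s = t := by
  cases s; cases t; simpa using h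

/-- The quotient module of `X` by a subfunctor. -/
def Xq (X : PMod A) (s : SubF A X) : PMod A where
  obj a := AddCommGrpCat.of (X.obj a ⧸ s.S a.unop)
  map {a b} φ := AddCommGrpCat.ofHom <|
    QuotientAddGroup.map (s.S a.unop) (s.S b.unop) (X.map φ).hom
      (fun x hx => s.mapMem φ.unop x hx)
  map_id a := by
    refine AddCommGrpCat.ext fun q => ?_
    induction q using QuotientAddGroup.induction_on with
    | H x => show QuotientAddGroup.mk (X.map (𝟙 a) x) = _ ; rw [X.map_id]; rfl
  map_comp {a b c} f g := by
    refine AddCommGrpCat.ext fun q => ?_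
    induction q using QuotientAddGroup.induction_on with
    | H x =>
      show QuotientAddGroup.mk (X.map (f ≫ g) x) = QuotientAddGroup.mk (X.map g (X.map f x))
      rw [X.map_comp]; rfl

/-- The quotient map. -/
def qmk (X : PMod A) (s : SubF A X) : X ⟶ Xq A X s where
  app a := AddCommGrpCat.ofHom (QuotientAddGroup.mk' (s.S a.unop))
  naturality a b φ := by
    refine AddCommGrpCat.ext fun x => ?_
    show QuotientAddGroup.mk (X.map φ x) = QuotientAddGroup.mk (X.map φ x)
    rfl

lemma Xq_map_mk (X : PMod A) (s : SubF A X) {a b : Aᵒᵖ} (φ : a ⟶ b) (x : X.obj a) :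
    (Xq A X s).map φ (QuotientAddGroup.mk x) = QuotientAddGroup.mk (X.map φ x) := rfl

lemma qmk_app (X : PMod A) (s : SubF A X) {a : Aᵒᵖ} (x : X.obj a) :
    (qmk A X s).app a x = QuotientAddGroup.mk x := rfl

lemma Xq_mk_eq_zero (X : PMod A) (s : SubF A X) {a : Aᵒᵖ} (x : X.obj a) :
    (QuotientAddGroup.mk x : X.obj a ⧸ s.S a.unop) = 0 ↔ x ∈ s.S a.unop :=
  QuotientAddGroup.eq_zero_iff x

lemma Xq_additive (X : PMod A) (s : SubF A X) (hX : X.Additive) : (Xq A X s).Additive := by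
  haveI := hX
  constructor
  intro a b f g
  refine AddCommGrpCat.ext fun q => ?_
  induction q using QuotientAddGroup.induction_on with
  | H x =>
    show QuotientAddGroup.mk (X.map (f + g) x) = _
    rw [X.map_add]
    show QuotientAddGroup.mk (X.map f x + X.map g x) =
      ((Xq A X s).map f + (Xq A X s).map g) (QuotientAddGroup.mk x)
    rfl

/-- The submodule attached to a subfunctor, as a module. -/
def Sf (X : PMod A) (s : SubF A X) : PMod A where
  obj a := AddCommGrpCat.of (s.S a.unop)
  map {a b} φ := AddCommGrpCat.ofHom (AddMonoidHom.mk'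
    (fun x => (⟨X.map φ x.1, s.mapMem φ.unop x.1 x.2⟩ : s.S b.unop))
    (fun x y => by
      apply Subtype.ext
      show X.map φ (x.1 + y.1) = X.map φ x.1 + X.map φ y.1
      rw [map_add]))
  map_id a := by
    refine AddCommGrpCat.ext fun x => ?_
    apply Subtype.ext
    show X.map (𝟙 a) x.1 = x.1
    rw [X.map_id]; rfl
  map_comp {a b c} f g := by
    refine AddCommGrpCat.ext fun x => ?_
    apply Subtype.ext
    show X.map (f ≫ g) x.1 = X.map g (X.map f x.1)
    rw [X.map_comp]; rfl

lemma Sf_additive (X : PMod A) (s : SubF A X) (hX : X.Additive) : (Sf A X s).Additive := by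
  haveI := hX
  constructor
  intro a b f g
  refine AddCommGrpCat.ext fun x => ?_
  apply Subtype.ext
  show X.map (f + g) x.1 = (((Sf A X s).map f + (Sf A X s).map g) x).1
  rw [X.map_add]
  rfl

/-- The Yoneda morphism attached to `x ∈ M(b)`. -/
def yo (M : PMod A) (hM : M.Additive) {b : A} (x : M.obj (op b)) : Hrep A b ⟶ M where
  app a := AddCommGrpCat.ofHom (AddMonoidHom.mk' (fun γ => M.map (γ : a.unop ⟶ b).op x)
    (by
      haveI := hM
      intro γ δ
      show M.map ((γ + δ : a.unop ⟶ b)).op x = _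
      rw [op_add, M.map_add]
      rfl))
  naturality a a' f := by
    ext γ
    show M.map ((f.unop ≫ (γ : a.unop ⟶ b)) : a'.unop ⟶ b).op x
      = M.map f (M.map (γ : a.unop ⟶ b).op x)
    erw [op_comp, M.map_comp]
    rfl

lemma yo_app (M : PMod A) (hM : M.Additive) {b : A} (x : M.obj (op b)) {a : Aᵒᵖ}
    (γ : (Hrep A b).obj a) : (yo A M hM x).app a γ = M.map (γ : a.unop ⟶ b).op x := rfl

/-! ### Products -/

lemma pi_app_hom_ext {ι : Type u} (g : ι → PMod A) (a : Aᵒᵖ) {W : AddCommGrpCat.{u}}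
    (h k : W ⟶ (∏ᶜ g).obj a)
    (H : ∀ i, h ≫ (Pi.π g i).app a = k ≫ (Pi.π g i).app a) : h = k := by
  have L := isLimitOfPreserves ((evaluation Aᵒᵖ AddCommGrpCat.{u}).obj a)
    (limit.isLimit (Discrete.functor g))
  exact L.hom_ext (fun j => by cases' j with i; exact H i)

lemma prod_map_eq_zero {ι : Type u} (g : ι → PMod A) {x y : Aᵒᵖ} (φ : x ⟶ y)
    (H : ∀ i, (g i).map φ = 0) : (∏ᶜ g).map φ = 0 := by
  apply pi_app_hom_ext A g y
  intro i
  rw [(Pi.π g i).naturality φ, H i]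
  simp

lemma prod_additive {ι : Type u} (g : ι → PMod A) (hg : ∀ i, (g i).Additive) :
    (∏ᶜ g).Additive := by
  constructor
  intro x y f f'
  apply pi_app_hom_ext A g y
  intro i
  haveI := hg i
  rw [(Pi.π g i).naturality, Functor.map_add, Preadditive.add_comp, Preadditive.comp_add,
    ← (Pi.π g i).naturality, ← (Pi.π g i).naturality]

/-! ### Monomorphisms -/

lemma additive_of_mono {S X : PMod A} (f : S ⟶ X) (hf : Mono f) (hX : X.Additive) :
    S.Additive := by
  haveI := hf
  haveI := hX
  constructor
  intro a b u v
  haveI : Mono (f.app b) := inferInstance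
  rw [← cancel_mono (f.app b), f.naturality, X.map_add, Preadditive.add_comp,
    Preadditive.comp_add, ← f.naturality, ← f.naturality]

lemma map_eq_zero_of_mono {S X : PMod A} (f : S ⟶ X) (hf : Mono f) {x y : Aᵒᵖ} (φ : x ⟶ y)
    (h : X.map φ = 0) : S.map φ = 0 := by
  haveI := hf
  haveI : Mono (f.app y) := inferInstance
  rw [← cancel_mono (f.app y), f.naturality, h]
  simp

/-! ### The torsion subfunctor attached to an ideal -/

def tS (I : CatIdeal A) (X : PMod A) : SubF A X where
  S b :=
    { carrier := {x | ∀ (a : A) (α : a ⟶ b), α ∈ I.carrier a b → X.map α.op x = 0}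
      zero_mem' := fun a α _ => map_zero _
      add_mem' := fun hx hy a α hα => by
        rw [map_add, hx a α hα, hy a α hα, add_zero]
      neg_mem' := fun hx a α hα => by rw [map_neg, hx a α hα, neg_zero] }
  mapMem {a b} φ x hx a' α hα := by
    have h1 : X.map α.op (X.map φ.op x) = X.map ((α ≫ φ).op) x := by
      rw [op_comp, X.map_comp]; rfl
    rw [h1]
    exact hx a' (α ≫ φ) (I.comp_mem_left α φ hα)

lemma mem_tS (I : CatIdeal A) (X : PMod A) {b : A} (x : X.obj (op b)) :
    x ∈ (tS A I X).S b ↔ ∀ (a : A) (α : a ⟶ b), α ∈ I.carrier a b → X.map α.op x = 0 :=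
  Iff.rfl

def tQ (I : CatIdeal A) (X : PMod A) : PMod A := Xq A X (tS A I X)

def tπ (I : CatIdeal A) (X : PMod A) : X ⟶ tQ A I X := qmk A X (tS A I X)

/-- Torsion elements of the quotient by the torsion part vanish (uses idempotency). -/
lemma tQ_tors_zero (I : CatIdeal A) (hI : I.IsIdempotent) (X : PMod A) (hX : X.Additive)
    {b : A} (z : (tQ A I X).obj (op b))
    (hz : ∀ (a : A) (α : a ⟶ b), α ∈ I.carrier a b → (tQ A I X).map α.op z = 0) : z = 0 := by
  haveI := hX
  induction z using QuotientAddGroup.induction_on with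
  | H x =>
    erw [Xq_mk_eq_zero]
    intro a α hα
    rw [← hI a b] at hα
    have key : ∀ u ∈ {u : a ⟶ b | ∃ (c : A) (ψ : a ⟶ c) (φ : c ⟶ b),
        ψ ∈ I.carrier a c ∧ φ ∈ I.carrier c b ∧ u = ψ ≫ φ}, X.map (Quiver.Hom.op u) x = 0 := by
      rintro u ⟨c, ψ, φ, hψ, hφ, rfl⟩
      have h1 : X.map ((ψ ≫ φ).op) x = X.map ψ.op (X.map φ.op x) := by
        rw [op_comp, X.map_comp]; rfl
      rw [h1]
      have h3 : X.map φ.op x ∈ (tS A I X).S c :=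
        (QuotientAddGroup.eq_zero_iff _).1 (hz c φ hφ)
      exact h3 a ψ hψ
    let P : AddSubgroup (a ⟶ b) :=
      { carrier := {u | X.map (Quiver.Hom.op u) x = 0}
        zero_mem' := by
          show X.map ((0 : a ⟶ b).op) x = 0
          have h0 : ((0 : a ⟶ b)).op = (0 : op b ⟶ op a) := rfl
          rw [h0, X.map_zero]
          rfl
        add_mem' := by
          intro u v hu hv
          show X.map ((u + v).op) x = 0
          rw [op_add, X.map_add]
          show X.map u.op x + X.map v.op x = 0
          rw [hu, hv, add_zero]
        neg_mem' := by
          intro u hu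
          show X.map ((-u).op) x = 0
          rw [op_neg, X.map_neg]
          show -(X.map u.op x) = 0
          rw [hu, neg_zero] }
    exact AddSubgroup.closure_le P |>.2 key hα


/-! ### The forward direction: idempotent ideal gives a TTF class -/

def FI (I : CatIdeal A) : Set (PMod A) :=
  {X | X.Additive ∧ ∀ Y ∈ TI A I, ∀ f : Y ⟶ X, f = 0}

lemma tQ_mem_FI (I : CatIdeal A) (hI : I.IsIdempotent) (X : PMod A) (hX : X.Additive) :
    tQ A I X ∈ FI A I := by
  refine ⟨Xq_additive A X _ hX, fun Y hY f => ?_⟩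
  have key : ∀ (b : A) (y : Y.obj (op b)), f.app (op b) y = 0 := by
    intro b y
    apply tQ_tors_zero A I hI X hX
    intro a α hα
    have hnat : (tQ A I X).map α.op (f.app (op b) y) = f.app (op a) (Y.map α.op y) := by
      have h := f.naturality α.op
      have h2 : (Y.map α.op ≫ f.app (op a)) y = (f.app (op b) ≫ (tQ A I X).map α.op) y := by
        rw [h]
      rw [comp_apply, comp_apply] at h2
      exact h2.symm
    rw [hnat, hY.2 a b α hα]
    show f.app (op a) ((0 : Y.obj (op b) ⟶ Y.obj (op a)) y) = 0
    have h0 : (0 : Y.obj (op b) ⟶ Y.obj (op a)) y = 0 := rfl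
    rw [h0, map_zero]
  apply NatTrans.ext
  funext a
  show f.app a = 0
  refine AddCommGrpCat.ext fun y => ?_
  exact key a.unop y

lemma TI_torsionPair (I : CatIdeal A) (hI : I.IsIdempotent) :
    IsTorsionPair A (TI A I) (FI A I) := by
  refine ⟨?_, rfl, ?_⟩
  · apply Set.ext; intro X
    constructor
    · intro hX; exact ⟨hX.1, fun Y hY f => hY.2 X hX f⟩
    · rintro ⟨hAdd, h⟩
      have h0 := h (tQ A I X) (tQ_mem_FI A I hI X hAdd) (tπ A I X)
      refine ⟨hAdd, fun a b α hα => ?_⟩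
      refine AddCommGrpCat.ext fun x => ?_
      show X.map α.op x = 0
      have hx : x ∈ (tS A I X).S b := by
        apply (QuotientAddGroup.eq_zero_iff _).1
        show (tπ A I X).app (op b) x = 0
        rw [h0]
        rfl
      exact hx a α hα
  · intro X hX
    refine ⟨tQ A I X, tπ A I X, tQ_mem_FI A I hI X hX, ?_, ?_⟩
    · haveI : ∀ (a : Aᵒᵖ), Epi ((tπ A I X).app a) := fun a =>
        (AddCommGrpCat.epi_iff_surjective _).2 (fun z => QuotientAddGroup.mk'_surjective _ z)
      exact NatTrans.epi_of_epi_app _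
    · set p := tπ A I X with hp
      refine ⟨additive_of_mono A (kernel.ι p) inferInstance hX, fun a b α hα => ?_⟩
      haveI : Mono ((kernel.ι p).app (op a)) := inferInstance
      rw [← cancel_mono ((kernel.ι p).app (op a)), (kernel.ι p).naturality α.op, zero_comp]
      refine AddCommGrpCat.ext fun x => ?_
      show X.map α.op ((kernel.ι p).app (op b) x) = 0
      have hmem : (kernel.ι p).app (op b) x ∈ (tS A I X).S b := by
        apply (QuotientAddGroup.eq_zero_iff _).1
        show p.app (op b) ((kernel.ι p).app (op b) x) = 0
        have hc : (kernel.ι p) ≫ p = 0 := kernel.condition p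
        have h2 : ((kernel.ι p) ≫ p).app (op b) x = (0 : kernel p ⟶ tQ A I X).app (op b) x := by
          rw [hc]
        rw [NatTrans.comp_app, comp_apply] at h2
        exact h2
      exact hmem a α hα

theorem TI_TTF (I : CatIdeal A) (hI : I.IsIdempotent) : IsTTFClass A (TI A I) := by
  refine ⟨⟨⟨FI A I, TI_torsionPair A I hI⟩, ?_⟩, ?_⟩
  · intro S X f hf hX
    exact ⟨additive_of_mono A f hf hX.1,
      fun a b α hα => map_eq_zero_of_mono A f hf α.op (hX.2 a b α hα)⟩
  · intro ι g hg
    exact ⟨prod_additive A g (fun i => (hg i).1),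
      fun a b α hα => prod_map_eq_zero A g α.op (fun i => (hg i).2 a b α hα)⟩


/-! ### Ideal multiplication helpers -/

lemma idealMul_comp_post (I J : CatIdeal A) {a b c : A} (f : a ⟶ b) (g : b ⟶ c)
    (hf : f ∈ idealMul A I J a b) : f ≫ g ∈ idealMul A I J a c := by
  let h : (a ⟶ b) →+ (a ⟶ c) :=
    AddMonoidHom.mk' (fun u => u ≫ g) (fun u v => Preadditive.add_comp _ _ _ _ _ _)
  have hle : idealMul A I J a b ≤ (idealMul A I J a c).comap h := by
    apply (AddSubgroup.closure_le _).2
    rintro u ⟨d, ψ, φ, hψ, hφ, rfl⟩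
    show (ψ ≫ φ) ≫ g ∈ idealMul A I J a c
    rw [Category.assoc]
    exact AddSubgroup.subset_closure ⟨d, ψ, φ ≫ g, hψ, I.comp_mem_left φ g hφ, rfl⟩
  exact hle hf

lemma idealMul_comp_pre (I J : CatIdeal A) {a b c : A} (f : a ⟶ b) (g : b ⟶ c)
    (hg : g ∈ idealMul A I J b c) : f ≫ g ∈ idealMul A I J a c := by
  let h : (b ⟶ c) →+ (a ⟶ c) :=
    AddMonoidHom.mk' (fun u => f ≫ u) (fun u v => Preadditive.comp_add _ _ _ _ _ _)
  have hle : idealMul A I J b c ≤ (idealMul A I J a c).comap h := by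
    apply (AddSubgroup.closure_le _).2
    rintro u ⟨d, ψ, φ, hψ, hφ, rfl⟩
    show f ≫ (ψ ≫ φ) ∈ idealMul A I J a c
    rw [← Category.assoc]
    exact AddSubgroup.subset_closure ⟨d, f ≫ ψ, φ, J.comp_mem_right f ψ hψ, hφ, rfl⟩
  exact hle hg

lemma idealMul_le (I J : CatIdeal A) (a b : A) : idealMul A I J a b ≤ I.carrier a b := by
  apply (AddSubgroup.closure_le _).2
  rintro u ⟨d, ψ, φ, hψ, hφ, rfl⟩
  exact I.comp_mem_right ψ φ hφ

/-! ### The annihilator ideal of a class of modules -/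

def annIdeal (T : Set (PMod A)) (h : ∀ M ∈ T, M.Additive) : CatIdeal A where
  carrier a b :=
    { carrier := {r : a ⟶ b | ∀ M ∈ T, M.map r.op = 0}
      zero_mem' := fun M hM => by
        haveI := h M hM
        have h0 : ((0 : a ⟶ b)).op = (0 : op b ⟶ op a) := rfl
        rw [h0, M.map_zero]
      add_mem' := fun {r s} hr hs M hM => by
        haveI := h M hM
        rw [op_add, M.map_add, hr M hM, hs M hM, add_zero]
      neg_mem' := fun {r} hr M hM => by
        haveI := h M hM
        rw [op_neg, M.map_neg, hr M hM, neg_zero] }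
  comp_mem_left f g hf M hM := by
    rw [op_comp, M.map_comp, hf M hM, comp_zero]
  comp_mem_right f g hg M hM := by
    rw [op_comp, M.map_comp, hg M hM, zero_comp]

lemma mem_annIdeal (T : Set (PMod A)) (h : ∀ M ∈ T, M.Additive) {a b : A} (r : a ⟶ b) :
    r ∈ (annIdeal A T h).carrier a b ↔ ∀ M ∈ T, M.map r.op = 0 := Iff.rfl

/-- If the quotient of the representable by a subfunctor is in `T`, then the subfunctor
contains the annihilator. -/
lemma mem_of_quot_mem (T : Set (PMod A)) {b : A} (s : SubF A (Hrep A b))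
    (hs : Xq A (Hrep A b) s ∈ T) {a : A} {r : a ⟶ b}
    (hr : ∀ M ∈ T, M.map r.op = 0) : r ∈ s.S a := by
  have h0 := hr _ hs
  have h1 : (Xq A (Hrep A b) s).map r.op
      (QuotientAddGroup.mk (toH A (𝟙 b))) = 0 := by rw [h0]; rfl
  have h2 : (QuotientAddGroup.mk ((Hrep A b).map r.op (toH A (𝟙 b))) :
      (Hrep A b).obj (op a) ⧸ s.S a) = 0 := h1
  have h3 : (Hrep A b).map r.op (toH A (𝟙 b)) = toH A r := by
    show r ≫ 𝟙 b = r
    simp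
  rw [h3] at h2
  exact (QuotientAddGroup.eq_zero_iff (toH A r)).1 h2

/-- Map between quotients along an inclusion of subfunctors. -/
def qle {X : PMod A} (s t : SubF A X) (hst : ∀ a, s.S a ≤ t.S a) : Xq A X s ⟶ Xq A X t where
  app a := AddCommGrpCat.ofHom (QuotientAddGroup.map _ _ (AddMonoidHom.id _)
    (fun x hx => hst a.unop hx))
  naturality a b φ := by
    refine AddCommGrpCat.ext fun q => ?_
    induction q using QuotientAddGroup.induction_on with
    | H x =>
      show (QuotientAddGroup.mk (X.map φ x) : X.obj b ⧸ t.S b.unop)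
        = QuotientAddGroup.mk (X.map φ (AddMonoidHom.id _ x))
      rfl

def QSet (T : Set (PMod A)) (b : A) : Type u :=
  {s : SubF A (Hrep A b) // Xq A (Hrep A b) s ∈ T}

/-- The intersection of all subfunctors of the representable with quotient in `T`. -/
def cSubF (T : Set (PMod A)) (b : A) : SubF A (Hrep A b) where
  S a := ⨅ s : QSet A T b, s.1.S a
  mapMem {a a'} φ x hx := by
    rw [AddSubgroup.mem_iInf] at hx ⊢
    intro s
    exact s.1.mapMem φ x (hx s)

lemma Hq_c_mem (T : Set (PMod A))
    (hher : ∀ (S X : PMod A) (f : S ⟶ X), Mono f → X ∈ T → S ∈ T)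
    (hprod : ∀ (ι : Type u) (g : ι → PMod A), (∀ i, g i ∈ T) → (∏ᶜ g) ∈ T) (b : A) :
    Xq A (Hrep A b) (cSubF A T b) ∈ T := by
  set g : QSet A T b → PMod A := fun s => Xq A (Hrep A b) s.1 with hgdef
  have hP : (∏ᶜ g) ∈ T := hprod _ g (fun s => s.2)
  set q : Xq A (Hrep A b) (cSubF A T b) ⟶ ∏ᶜ g :=
    Pi.lift (fun s => qle A (cSubF A T b) s.1
      (fun a => iInf_le (fun s' : QSet A T b => s'.1.S a) s)) with hqdef
  have hker : ∀ (a : Aᵒᵖ) (z : (Xq A (Hrep A b) (cSubF A T b)).obj a), q.app a z = 0 → z = 0 := by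
    intro a z hz
    induction z using QuotientAddGroup.induction_on with
    | H x =>
      apply (QuotientAddGroup.eq_zero_iff _).2
      have hmem : ∀ s : QSet A T b, x ∈ s.1.S a.unop := by
        intro s
        have h2 : q ≫ Pi.π g s = qle A (cSubF A T b) s.1
            (fun a => iInf_le (fun s' : QSet A T b => s'.1.S a) s) := by
          rw [hqdef]
          exact Pi.lift_π _ _
        have h1 : (q ≫ Pi.π g s).app a (QuotientAddGroup.mk x) = 0 := by
          erw [NatTrans.comp_app, comp_apply, hz]
          exact ((Pi.π g s).app a).hom.map_zero
        rw [h2] at h1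
        have h4 : (QuotientAddGroup.mk x : (Hrep A b).obj a ⧸ s.1.S a.unop) = 0 := h1
        exact (QuotientAddGroup.eq_zero_iff _).1 h4
      exact AddSubgroup.mem_iInf.2 hmem
  have hmono : Mono q := by
    haveI : ∀ (a : Aᵒᵖ), Mono (q.app a) := fun a => by
      rw [AddCommGrpCat.mono_iff_injective]
      intro z w hzw
      have := hker a (z - w) (by rw [map_sub, hzw, sub_self])
      exact sub_eq_zero.1 this
    exact NatTrans.mono_of_mono_app _
  exact hher _ _ q hmono hP

/-- Factor a Yoneda morphism through a quotient of the representable. -/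
def factorYo (M : PMod A) (hM : M.Additive) {b : A} (y : M.obj (op b)) (s : SubF A (Hrep A b))
    (hvan : ∀ (a : A), ∀ γ ∈ s.S a, M.map (γ : a ⟶ b).op y = 0) : Xq A (Hrep A b) s ⟶ M where
  app a := AddCommGrpCat.ofHom (QuotientAddGroup.lift (s.S a.unop) ((yo A M hM y).app a).hom
    (fun γ hγ => AddMonoidHom.mem_ker.2 (hvan a.unop γ hγ)))
  naturality a a' f := by
    refine AddCommGrpCat.ext fun q => ?_
    induction q using QuotientAddGroup.induction_on with
    | H γ =>
      show M.map ((f.unop ≫ (γ : a.unop ⟶ b)) : a'.unop ⟶ b).op y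
        = M.map f (M.map (γ : a.unop ⟶ b).op y)
      erw [op_comp, M.map_comp]
      rfl

lemma factorYo_app (M : PMod A) (hM : M.Additive) {b : A} (y : M.obj (op b))
    (s : SubF A (Hrep A b)) (hvan : ∀ (a : A), ∀ γ ∈ s.S a, M.map (γ : a ⟶ b).op y = 0)
    {a : Aᵒᵖ} (γ : (Hrep A b).obj a) :
    (factorYo A M hM y s hvan).app a (QuotientAddGroup.mk γ) = M.map (γ : a.unop ⟶ b).op y := rfl

/-- The kernel subfunctor of a Yoneda morphism. -/
def kerSubF (M : PMod A) (hM : M.Additive) (b : A) (x : M.obj (op b)) : SubF A (Hrep A b) where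
  S a :=
    { carrier := {γ : a ⟶ b | M.map γ.op x = 0}
      zero_mem' := by
        haveI := hM
        show M.map ((0 : a ⟶ b)).op x = 0
        have h0 : ((0 : a ⟶ b)).op = (0 : op b ⟶ op a) := rfl
        rw [h0, M.map_zero]
        rfl
      add_mem' := by
        haveI := hM
        intro u v hu hv
        show M.map ((u + v)).op x = 0
        erw [op_add, M.map_add]
        show M.map u.op x + M.map v.op x = 0
        rw [hu, hv, add_zero]
      neg_mem' := by
        haveI := hM
        intro u hu
        show M.map ((-u)).op x = 0
        erw [op_neg, M.map_neg]
        show -(M.map u.op x) = 0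
        rw [hu, neg_zero] }
  mapMem {a a'} φ γ hγ := by
    show M.map ((φ ≫ (γ : a' ⟶ b)) : a ⟶ b).op x = 0
    have h2 : M.map ((φ ≫ (γ : a' ⟶ b)) : a ⟶ b).op x
        = M.map φ.op (M.map (γ : a' ⟶ b).op x) := by
      erw [op_comp, M.map_comp]; rfl
    have h1 : M.map (γ : a' ⟶ b).op x = 0 := hγ
    rw [h2, h1, map_zero]

lemma ann_eq_c (T : Set (PMod A)) (h : ∀ M ∈ T, M.Additive)
    (hher : ∀ (S X : PMod A) (f : S ⟶ X), Mono f → X ∈ T → S ∈ T)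
    (a b : A) : (annIdeal A T h).carrier a b = (cSubF A T b).S a := by
  apply le_antisymm
  · intro r hr
    exact AddSubgroup.mem_iInf.2 (fun s => mem_of_quot_mem A T s.1 s.2 hr)
  · intro r hr M hM
    refine AddCommGrpCat.ext fun x => ?_
    show M.map r.op x = 0
    have hM' := h M hM
    have hinj : ∀ (a' : Aᵒᵖ) (z : (Xq A (Hrep A b) (kerSubF A M hM' b x)).obj a'),
        (factorYo A M hM' x (kerSubF A M hM' b x) (fun _ _ hγ => hγ)).app a' z = 0 → z = 0 := by
      intro a' z hz
      induction z using QuotientAddGroup.induction_on with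
      | H γ =>
        apply (QuotientAddGroup.eq_zero_iff _).2
        exact hz
    have hmono : Mono (factorYo A M hM' x (kerSubF A M hM' b x) (fun _ _ hγ => hγ)) := by
      haveI : ∀ (a' : Aᵒᵖ),
          Mono ((factorYo A M hM' x (kerSubF A M hM' b x) (fun _ _ hγ => hγ)).app a') := fun a' => by
        rw [AddCommGrpCat.mono_iff_injective]
        intro z w hzw
        have := hinj a' (z - w) (by rw [map_sub, hzw, sub_self])
        exact sub_eq_zero.1 this
      exact NatTrans.mono_of_mono_app _
    have hmem : Xq A (Hrep A b) (kerSubF A M hM' b x) ∈ T := hher _ _ _ hmono hM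
    have h2 : r ∈ (kerSubF A M hM' b x).S a := AddSubgroup.mem_iInf.1 hr ⟨_, hmem⟩
    exact h2

/-! ### Right inverse: `TI (annIdeal T) = T` for a TTF class `T` -/

theorem TI_ann_eq (T F : Set (PMod A))
    (hTeq : T = {X | X.Additive ∧ ∀ Y ∈ F, ∀ f : X ⟶ Y, f = 0})
    (hFeq : F = {X | X.Additive ∧ ∀ Y ∈ T, ∀ f : Y ⟶ X, f = 0})
    (hher : ∀ (S X : PMod A) (f : S ⟶ X), Mono f → X ∈ T → S ∈ T)
    (hprod : ∀ (ι : Type u) (g : ι → PMod A), (∀ i, g i ∈ T) → (∏ᶜ g) ∈ T)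
    (h : ∀ M ∈ T, M.Additive) :
    TI A (annIdeal A T h) = T := by
  apply Set.ext
  intro M
  constructor
  · intro hM
    rw [hTeq]
    refine ⟨hM.1, fun Y hY f => ?_⟩
    have hY' := hY
    rw [hFeq] at hY'
    obtain ⟨hYadd, hYhom⟩ := hY'
    have key : ∀ (b : A) (x : M.obj (op b)), f.app (op b) x = 0 := by
      intro b x
      have hann : ∀ (a : A) (γ : a ⟶ b), γ ∈ (cSubF A T b).S a →
          Y.map γ.op (f.app (op b) x) = 0 := by
        intro a γ hγ
        rw [← ann_eq_c A T h hher] at hγ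
        have hnat : Y.map γ.op (f.app (op b) x) = f.app (op a) (M.map γ.op x) := by
          have hn := f.naturality γ.op
          have h2 : (M.map γ.op ≫ f.app (op a)) x = (f.app (op b) ≫ Y.map γ.op) x := by rw [hn]
          rw [comp_apply, comp_apply] at h2
          exact h2.symm
        rw [hnat, hM.2 a b γ hγ]
        have h0 : (0 : M.obj (op b) ⟶ M.obj (op a)) x = 0 := rfl
        rw [h0, map_zero]
      set g0 := factorYo A Y hYadd (f.app (op b) x) (cSubF A T b) hann with hg0def
      have hg0 : g0 = 0 := hYhom _ (Hq_c_mem A T hher hprod b) g0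
      have h5 : g0.app (op b) (QuotientAddGroup.mk (toH A (𝟙 b))) = 0 := by rw [hg0]; rfl
      erw [factorYo_app] at h5
      have h6 : Y.map (Quiver.Hom.op (toH A (𝟙 b))) (f.app (op b) x) = f.app (op b) x := by
        have h7 : (Quiver.Hom.op (toH A (𝟙 b))) = 𝟙 (op b) := rfl
        rw [h7, Y.map_id]
        rfl
      rw [h6] at h5
      exact h5
    apply NatTrans.ext
    funext a
    show f.app a = 0
    refine AddCommGrpCat.ext fun x => ?_
    exact key a.unop x
  · intro hM
    exact ⟨h M hM, fun a b α hα => hα M hM⟩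

/-! ### Idempotency of the annihilator ideal -/

theorem ann_idem (T F : Set (PMod A))
    (hTeq : T = {X | X.Additive ∧ ∀ Y ∈ F, ∀ f : X ⟶ Y, f = 0})
    (hFeq : F = {X | X.Additive ∧ ∀ Y ∈ T, ∀ f : Y ⟶ X, f = 0})
    (hher : ∀ (S X : PMod A) (f : S ⟶ X), Mono f → X ∈ T → S ∈ T)
    (hprod : ∀ (ι : Type u) (g : ι → PMod A), (∀ i, g i ∈ T) → (∏ᶜ g) ∈ T)
    (h : ∀ M ∈ T, M.Additive) :
    (annIdeal A T h).IsIdempotent := by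
  set I := annIdeal A T h with hIdef
  intro a b
  apply le_antisymm
  · exact idealMul_le A I I a b
  · -- the subfunctor J(-,b) of the representable
    set Js : SubF A (Hrep A b) :=
      { S := fun a' => idealMul A I I a' b
        mapMem := fun {a' a''} φ x hx => idealMul_comp_pre A I I φ x hx } with hJsdef
    -- the subfunctor I(-,b) of the representable
    set annSub : SubF A (Hrep A b) :=
      { S := fun a' => I.carrier a' b
        mapMem := fun {a' a''} φ x hx => I.comp_mem_right φ x hx } with hannSubdef
    set SfI := Sf A (Hrep A b) annSub with hSfIdef
    set midSub : SubF A SfI :=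
      { S := fun a' => (idealMul A I I a' b).addSubgroupOf (I.carrier a' b)
        mapMem := fun {a' a''} φ x hx => by
          erw [AddSubgroup.mem_addSubgroupOf] at hx ⊢
          exact idealMul_comp_pre A I I φ x.1 hx } with hmidSubdef
    set N := Xq A SfI midSub with hNdef
    have hNT : N ∈ T := by
      rw [← TI_ann_eq A T F hTeq hFeq hher hprod h]
      refine ⟨Xq_additive A _ _ (Sf_additive A _ _ (Hrep_additive A b)), ?_⟩
      intro c d α hα
      refine AddCommGrpCat.ext fun q => ?_
      show N.map α.op q = 0
      induction q using QuotientAddGroup.induction_on with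
      | H x =>
        have h1 : N.map α.op (QuotientAddGroup.mk x) = QuotientAddGroup.mk (SfI.map α.op x) :=
          rfl
        rw [h1]
        apply (QuotientAddGroup.eq_zero_iff _).2
        erw [AddSubgroup.mem_addSubgroupOf]
        show α ≫ x.1 ∈ idealMul A I I c b
        exact AddSubgroup.subset_closure ⟨d, α, x.1, hα, x.2, rfl⟩
    have hQJ : Xq A (Hrep A b) Js ∈ T := by
      rw [hTeq]
      refine ⟨Xq_additive A _ _ (Hrep_additive A b), ?_⟩
      intro Y hY f
      have hY' := hY
      rw [hFeq] at hY'
      obtain ⟨hYadd, hYhom⟩ := hY'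
      -- Step A : `f` kills classes of elements of `I(-,b)`
      have hvan : ∀ (a' : A) (γ : a' ⟶ b), γ ∈ I.carrier a' b →
          f.app (op a') (QuotientAddGroup.mk (toH A γ)) = 0 := by
        intro a' γ hγ
        set hN : N ⟶ Y :=
          { app := fun c => AddCommGrpCat.ofHom (QuotientAddGroup.lift (midSub.S c.unop)
              ((f.app c).hom.comp ((QuotientAddGroup.mk' (Js.S c.unop)).comp
                ((annSub.S c.unop).subtype)))
              (fun x hx => by
                apply AddMonoidHom.mem_ker.2
                show f.app c (QuotientAddGroup.mk x.1) = 0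
                have hz : (QuotientAddGroup.mk x.1 : (Hrep A b).obj c ⧸ Js.S c.unop) = 0 :=
                  (QuotientAddGroup.eq_zero_iff _).2 ((AddSubgroup.mem_addSubgroupOf).1 hx)
                erw [hz, map_zero]))
            naturality := by
              intro c c' φ
              refine AddCommGrpCat.ext fun q => ?_
              induction q using QuotientAddGroup.induction_on with
              | H x =>
                show f.app c' (QuotientAddGroup.mk ((Hrep A b).map φ x.1))
                  = Y.map φ (f.app c (QuotientAddGroup.mk x.1))
                have hn := f.naturality φ
                have h2 : ((Xq A (Hrep A b) Js).map φ ≫ f.app c') (QuotientAddGroup.mk x.1)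
                    = (f.app c ≫ Y.map φ) (QuotientAddGroup.mk x.1) := by rw [hn]
                erw [comp_apply, comp_apply] at h2
                exact h2 } with hNdef2
        have hN0 : hN = 0 := hYhom _ hNT hN
        have h3 : hN.app (op a')
            (QuotientAddGroup.mk (⟨toH A γ, hγ⟩ : annSub.S a')) = 0 := by rw [hN0]; rfl
        exact h3
      -- Step B : `f` factors through the quotient by `I(-,b)`, which is in `T`
      have hQann : Xq A (Hrep A b) annSub ∈ T := by
        have he : annSub = cSubF A T b := by
          apply SubF.ext'
          funext a'
          exact ann_eq_c A T h hher a' b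
        rw [he]
        exact Hq_c_mem A T hher hprod b
      set g2 : Xq A (Hrep A b) annSub ⟶ Y :=
        { app := fun c => AddCommGrpCat.ofHom (QuotientAddGroup.lift (annSub.S c.unop)
            ((f.app c).hom.comp (QuotientAddGroup.mk' (Js.S c.unop)))
            (fun γ hγ => AddMonoidHom.mem_ker.2 (hvan c.unop γ hγ)))
          naturality := by
            intro c c' φ
            refine AddCommGrpCat.ext fun q => ?_
            induction q using QuotientAddGroup.induction_on with
            | H γ =>
              show f.app c' (QuotientAddGroup.mk ((Hrep A b).map φ γ))
                = Y.map φ (f.app c (QuotientAddGroup.mk γ))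
              have hn := f.naturality φ
              have h2 : ((Xq A (Hrep A b) Js).map φ ≫ f.app c') (QuotientAddGroup.mk γ)
                  = (f.app c ≫ Y.map φ) (QuotientAddGroup.mk γ) := by rw [hn]
              erw [comp_apply, comp_apply] at h2
              exact h2 } with hg2def
      have hg20 : g2 = 0 := hYhom _ hQann g2
      apply NatTrans.ext
      funext c
      show f.app c = 0
      refine AddCommGrpCat.ext fun q => ?_
      show f.app c q = 0
      induction q using QuotientAddGroup.induction_on with
      | H γ =>
        have h4 : g2.app c (QuotientAddGroup.mk γ) = 0 := by rw [hg20]; rfl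
        exact h4
    intro r hr
    exact mem_of_quot_mem A T Js hQJ hr

/-! ### Left inverse -/

lemma CatIdeal.ext2 {I J : CatIdeal A} (h : I.carrier = J.carrier) : I = J := by
  cases I; cases J
  dsimp at h
  subst h
  rfl

theorem ann_TI_eq (I : CatIdeal A) :
    annIdeal A (TI A I) (fun M hM => hM.1) = I := by
  have hcar : ∀ a b : A, (annIdeal A (TI A I) (fun M hM => hM.1)).carrier a b
      = I.carrier a b := by
    intro a b
    apply le_antisymm
    · intro r hr
      -- use the module `Hrep b / I(-,b)`
      set s : SubF A (Hrep A b) :=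
        { S := fun a' => I.carrier a' b
          mapMem := fun {a' a''} φ x hx => I.comp_mem_right φ x hx } with hsdef
      have hmem : Xq A (Hrep A b) s ∈ TI A I := by
        refine ⟨Xq_additive A _ _ (Hrep_additive A b), ?_⟩
        intro c d α hα
        refine AddCommGrpCat.ext fun q => ?_
        show (Xq A (Hrep A b) s).map α.op q = 0
        induction q using QuotientAddGroup.induction_on with
        | H x =>
          have h1 : (Xq A (Hrep A b) s).map α.op (QuotientAddGroup.mk x)
              = QuotientAddGroup.mk ((Hrep A b).map α.op x) := rfl
          rw [h1]
          apply (QuotientAddGroup.eq_zero_iff _).2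
          show α ≫ x ∈ I.carrier c b
          exact I.comp_mem_left α x hα
      exact mem_of_quot_mem A (TI A I) s hmem hr
    · intro r hrI M hM
      exact hM.2 a b r hrI
  exact CatIdeal.ext2 A (funext fun a => funext fun b => hcar a b)

lemma TTF_add {T : Set (PMod A)} (hT : IsTTFClass A T) : ∀ M ∈ T, M.Additive := by
  obtain ⟨⟨⟨F, hTeq, _, _⟩, _⟩, _⟩ := hT
  intro M hM
  rw [hTeq] at hM
  exact hM.1

theorem statement1 :
    ∃ e : {I : CatIdeal A // I.IsIdempotent} ≃ {T : Set (PMod A) // IsTTFClass A T},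
      (∀ I : {I : CatIdeal A // I.IsIdempotent}, (e I).1 = TI A I.1) ∧
      (∀ (T : {T : Set (PMod A) // IsTTFClass A T}) (a b : A),
        ((e.symm T).1.carrier a b : Set (a ⟶ b)) =
          {r : a ⟶ b | ∀ M ∈ T.1, M.map r.op = 0}) := by
  have idem : ∀ T : {T : Set (PMod A) // IsTTFClass A T},
      (annIdeal A T.1 (TTF_add A T.2)).IsIdempotent := by
    intro T
    obtain ⟨⟨⟨F, hTeq, hFeq, hdec⟩, hher⟩, hprod⟩ := T.2
    exact ann_idem A T.1 F hTeq hFeq hher hprod (TTF_add A T.2)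
  refine ⟨⟨fun I => ⟨TI A I.1, TI_TTF A I.1 I.2⟩,
      fun T => ⟨annIdeal A T.1 (TTF_add A T.2), idem T⟩, fun I => ?_, fun T => ?_⟩,
      fun I => rfl, fun T a b => rfl⟩
  · apply Subtype.ext
    exact ann_TI_eq A I.1
  · apply Subtype.ext
    obtain ⟨⟨⟨F, hTeq, hFeq, hdec⟩, hher⟩, hprod⟩ := T.2
    exact TI_ann_eq A T.1 F hTeq hFeq hher hprod (TTF_add A T.2)
end
end

section
/- Let A be a small preadditive category. Then the center Z(A) of A is isomorphic as a ring to the center Z(Mod A) of its module category. Explicitly, the map sending a natural transformation α : id_A → id_A to the natural transformation of id_{Mod A} whose component at a module M is given pointwise by M(α_a) : M(a) → M(a), is a ring isomorphism Z(A) → Z(Mod A). -/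
open CategoryTheory CategoryTheory.Limits Opposite
noncomputable section
set_option synthInstance.maxHeartbeats 1000000
set_option maxHeartbeats 1000000
universe u
variable (A : Type u) [SmallCategory A] [Preadditive A]

/-- The category of right `A`-modules: additive functors `Aᵒᵖ ⥤ Ab`. -/
abbrev ModCat := ObjectProperty.FullSubcategory (fun M : PMod A => M.Additive)

/-- The natural endomorphism of a module `M` induced by a natural transformation
`α : 𝟭 A ⟶ 𝟭 A`, given pointwise by `M (α_a)`. -/
def centerMapApp (α : End (𝟭 A)) (M : ModCat A) : M ⟶ M where
  hom :=
  { app x := M.1.map (α.app x.unop).op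
    naturality x y f := by
      dsimp
      rw [← M.1.map_comp, ← M.1.map_comp]
      congr 1
      have h := α.naturality f.unop
      dsimp at h
      rw [← f.op_unop, ← op_comp, ← op_comp, h] }

/-- The natural transformation of `𝟭 (ModCat A)` associated with `α : 𝟭 A ⟶ 𝟭 A`. -/
def centerToModCenter (α : End (𝟭 A)) : End (𝟭 (ModCat A)) where
  app M := centerMapApp A α M
  naturality M N φ := by
    apply ObjectProperty.hom_ext
    apply NatTrans.ext
    funext x
    exact (φ.hom.naturality (α.app x.unop).op).symm

/-- The representable module of `a`. -/
def yMod (a : A) : ModCat A := ⟨preadditiveYoneda.obj a, inferInstance⟩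

/-- The Yoneda-lemma morphism `yMod a ⟶ M` associated with `m : M (op a)`. -/
def yonedaHom (M : ModCat A) (a : A) (m : M.1.obj (op a)) : yMod A a ⟶ M where
  hom := {
  app x := AddCommGrpCat.ofHom <| AddMonoidHom.mk' (fun f => M.1.map f.op m) (by
    intro f g
    show M.1.map (f + g).op m = M.1.map f.op m + M.1.map g.op m
    have : (f + g).op = f.op + g.op := rfl
    rw [this, M.2.map_add]
    rfl)
  naturality x y g := by
    refine AddCommGrpCat.ext fun f => ?_
    show M.1.map (g.unop ≫ f).op m = M.1.map g (M.1.map f.op m)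
    have : (g.unop ≫ f).op = f.op ≫ g := rfl
    rw [this, M.1.map_comp]
    rfl }

lemma key (β : End (𝟭 (ModCat A))) (M : ModCat A) (a : A) (m : M.1.obj (op a)) :
    (β.app M).hom.app (op a) m =
      M.1.map ((β.app (yMod A a)).hom.app (op a) (𝟙 a)).op m := by
  have h := congrArg (fun (φ : yMod A a ⟶ M) => (φ.hom.app (op a)) (𝟙 a))
    (β.naturality (yonedaHom A M a m))
  have h' : ((β.app M).hom.app (op a)) ((yonedaHom A M a m).hom.app (op a) (𝟙 a)) =
      ((yonedaHom A M a m).hom.app (op a)) ((β.app (yMod A a)).hom.app (op a) (𝟙 a)) := h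
  have hl : ((yonedaHom A M a m).hom.app (op a)) (𝟙 a) = m := by
    show M.1.map (𝟙 a).op m = m
    simp
  rw [hl] at h'
  exact h'

/-- The inverse map, from the center of `ModCat A` to the center of `A`. -/
def modCenterToCenter (β : End (𝟭 (ModCat A))) : End (𝟭 A) where
  app a := (β.app (yMod A a)).hom.app (op a) (𝟙 a)
  naturality a b f := by
    dsimp
    have h1 : (β.app (yMod A b)).hom.app (op a) f =
        (β.app (yMod A a)).hom.app (op a) (𝟙 a) ≫ f := key A β (yMod A b) a f
    have h2 : (β.app (yMod A b)).hom.app (op a) (f ≫ 𝟙 b) =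
        f ≫ (β.app (yMod A b)).hom.app (op b) (𝟙 b) :=
      congrArg (fun (φ : (yMod A b).1.obj (op b) ⟶ (yMod A b).1.obj (op a)) =>
        φ (𝟙 b)) ((β.app (yMod A b)).hom.naturality f.op)
    rw [Category.comp_id] at h2
    exact h2.symm.trans h1

theorem statement15 :
    ∃ e : End (𝟭 A) ≃+* End (𝟭 (ModCat A)),
      ∀ α : End (𝟭 A), e α = centerToModCenter A α := by
  refine ⟨{ toFun := centerToModCenter A
            invFun := modCenterToCenter A
            left_inv := ?_
            right_inv := ?_
            map_mul' := ?_
            map_add' := ?_ }, fun _ => rfl⟩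
  · intro α
    apply NatTrans.ext
    funext a
    show α.app a ≫ 𝟙 a = α.app a
    simp
  · intro β
    apply NatTrans.ext
    funext M
    apply ObjectProperty.hom_ext
    apply NatTrans.ext
    funext x
    refine AddCommGrpCat.ext fun m => ?_
    exact (key A β M x.unop m).symm
  · intro α β
    apply NatTrans.ext
    funext M
    apply ObjectProperty.hom_ext
    apply NatTrans.ext
    funext x
    refine AddCommGrpCat.ext fun m => ?_
    show M.1.map ((α * β).app x.unop).op m = _
    have hmul : (α * β).app x.unop = β.app x.unop ≫ α.app x.unop := rfl
    have hcom : β.app x.unop ≫ α.app x.unop = α.app x.unop ≫ β.app x.unop := by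
      simpa using α.naturality (β.app x.unop)
    rw [hmul, hcom]
    have : (α.app x.unop ≫ β.app x.unop).op = (β.app x.unop).op ≫ (α.app x.unop).op := rfl
    rw [this, M.1.map_comp]
    rfl
  · intro α β
    apply NatTrans.ext
    funext M
    apply ObjectProperty.hom_ext
    apply NatTrans.ext
    funext x
    refine AddCommGrpCat.ext fun m => ?_
    show M.1.map ((α + β).app x.unop).op m = _
    have : ((α + β).app x.unop).op = (α.app x.unop).op + (β.app x.unop).op := rfl
    rw [this, M.2.map_add]
    rfl
end
end
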